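/- Let A be a subset of an abelian group with |A| = k sufficiently large. Then A contains a subset C with |C| ≥ k/8 and |C +̂ C| ≥ 7|C|. -/

import Mathlib

/-- The restricted sumset `X +̂ X = {x + y : x, y ∈ X, x ≠ y}`. -/
def hatAdd {G : Type*} [AddCommGroup G] [DecidableEq G] (X : Finset G) : Finset G :=
  ((X ×ˢ X).filter fun p => p.1 ≠ p.2).image fun p => p.1 + p.2

universe u

open Finset

set_option maxHeartbeats 1000000

section AuxCount

lemma card_powersetCard_filter_superset' {α : Type*} [DecidableEq α] {A P : Finset α} {m : ℕ}
    (hPA : P ⊆ A) (hPm : P.card ≤ m) :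
    ((A.powersetCard m).filter fun C => P ⊆ C).card
      = (A.card - P.card).choose (m - P.card) := by
  rw [← card_sdiff_of_subset hPA, ← Finset.card_powersetCard (m - P.card) (A \ P)]
  exact Finset.card_bij' (fun C _ => C \ P) (fun D _ => D ∪ P)
    (by
      intro C hC
      simp only [mem_filter, mem_powersetCard] at hC ⊢
      obtain ⟨⟨hCA, hCm⟩, hPC⟩ := hC
      refine ⟨sdiff_subset_sdiff hCA (Finset.Subset.refl P), ?_⟩
      rw [card_sdiff_of_subset hPC, hCm])
    (by
      intro D hD
      simp only [mem_filter, mem_powersetCard] at hD ⊢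
      obtain ⟨hDsub, hDcard⟩ := hD
      have hdisj : Disjoint D P := by
        refine Finset.disjoint_left.2 fun x hxD hxP => ?_
        exact (Finset.mem_sdiff.1 (hDsub hxD)).2 hxP
      refine ⟨⟨?_, ?_⟩, ?_⟩
      · exact Finset.union_subset (fun x hx => (Finset.mem_sdiff.1 (hDsub hx)).1) hPA
      · rw [Finset.card_union_of_disjoint hdisj, hDcard]
        omega
      · exact Finset.subset_union_right)
    (by
      intro C hC
      simp only [mem_filter, mem_powersetCard] at hC
      exact Finset.sdiff_union_of_subset hC.2)
    (by
      intro D hD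
      simp only [mem_powersetCard] at hD
      have hdisj : Disjoint D P := by
        refine Finset.disjoint_left.2 fun x hxD hxP => ?_
        exact (Finset.mem_sdiff.1 (hD.1 hxD)).2 hxP
      exact Finset.union_sdiff_cancel_right hdisj)

lemma choose_mul_two {k m : ℕ} (hm : 2 ≤ m) (hmk : m ≤ k) :
    k.choose m * (m * (m-1)) = k * (k-1) * (k-2).choose (m-2) := by
  obtain ⟨m', rfl⟩ : ∃ m', m = m' + 2 := ⟨m - 2, by omega⟩
  obtain ⟨k', rfl⟩ : ∃ k', k = k' + 2 := ⟨k - 2, by omega⟩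
  simp only [Nat.add_sub_cancel, show k' + 2 - 1 = k' + 1 by omega,
    show m' + 2 - 1 = m' + 1 by omega]
  have h1 := Nat.add_one_mul_choose_eq (k' + 1) (m' + 1)
  have h2 := Nat.add_one_mul_choose_eq k' m'
  nlinarith [h1, h2]

lemma choose_log_concave {k m : ℕ} (hm : 4 ≤ m) (hmk : m ≤ k) :
    k.choose m * (k-4).choose (m-4) ≤ (k-2).choose (m-2) * (k-2).choose (m-2) := by
  have I := choose_mul_two (show 2 ≤ m by omega) hmk
  have II := choose_mul_two (show 2 ≤ m - 2 by omega) (show m - 2 ≤ k - 2 by omega)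
  rw [show k - 2 - 1 = k - 3 by omega, show m - 2 - 1 = m - 3 by omega,
    show k - 2 - 2 = k - 4 by omega, show m - 2 - 2 = m - 4 by omega] at II
  have key : k*(k-1)*((m-2)*(m-3)) ≤ m*(m-1)*((k-2)*(k-3)) := by
    obtain ⟨m', rfl⟩ : ∃ m', m = m' + 4 := ⟨m - 4, by omega⟩
    obtain ⟨d, rfl⟩ : ∃ d, k = m' + 4 + d := ⟨k - (m'+4), by omega⟩
    simp only [show m' + 4 + d - 1 = m' + 3 + d by omega, show m' + 4 - 1 = m' + 3 by omega,
      show m' + 4 + d - 2 = m' + 2 + d by omega, show m' + 4 - 2 = m' + 2 by omega,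
      show m' + 4 + d - 3 = m' + 1 + d by omega, show m' + 4 - 3 = m' + 1 by omega]
    have e1 : (m'+4+d)*(m'+2) ≤ (m'+4)*(m'+2+d) := by nlinarith
    have e2 : (m'+3+d)*(m'+1) ≤ (m'+3)*(m'+1+d) := by nlinarith
    calc (m'+4+d)*(m'+3+d)*((m'+2)*(m'+1))
        = ((m'+4+d)*(m'+2))*((m'+3+d)*(m'+1)) := by ring
      _ ≤ ((m'+4)*(m'+2+d))*((m'+3)*(m'+1+d)) := Nat.mul_le_mul e1 e2
      _ = (m'+4)*(m'+3)*((m'+2+d)*(m'+1+d)) := by ring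
  have hc : 0 < m*(m-1)*((k-2)*(k-3)) := by
    have h1 : 0 < m - 1 := by omega
    have h2 : 0 < k - 2 := by omega
    have h3 : 0 < k - 3 := by omega
    have h4 : 0 < m := by omega
    positivity
  refine Nat.le_of_mul_le_mul_right ?_ hc
  calc k.choose m * (k-4).choose (m-4) * (m*(m-1)*((k-2)*(k-3)))
      = (k.choose m * (m*(m-1))) * ((k-2)*(k-3) * (k-4).choose (m-4)) := by ring
    _ = (k*(k-1) * (k-2).choose (m-2)) * ((k-2).choose (m-2) * ((m-2)*(m-3))) := by
        rw [I, ← II]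
    _ = ((k-2).choose (m-2) * (k-2).choose (m-2)) * (k*(k-1)*((m-2)*(m-3))) := by ring
    _ ≤ ((k-2).choose (m-2) * (k-2).choose (m-2)) * (m*(m-1)*((k-2)*(k-3))) :=
        Nat.mul_le_mul_left _ key

lemma cheb {ι : Type*} (𝒞 : Finset ι) (X : ι → ℕ) (r D2 D4 : ℕ)
    (h1 : ∑ C ∈ 𝒞, X C = r * D2)
    (h2 : ∑ C ∈ 𝒞, (X C)^2 ≤ 2*(r*D2) + (r*r)*D4)
    (hlc : 𝒞.card * D4 ≤ D2 * D2) :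
    (𝒞.filter fun C => X C = 0).card * (r * D2) ≤ 2 * (𝒞.card * 𝒞.card) := by
  classical
  set N := 𝒞.card with hN
  set Z := (𝒞.filter fun C => X C = 0).card with hZ
  set a : ℤ := (r : ℤ) * D2 with ha
  rcases Nat.eq_zero_or_pos (r * D2) with h0 | hpos
  · simp [h0]
  have key : (Z : ℤ) * a^2 ≤ ∑ C ∈ 𝒞, ((N:ℤ) * X C - a)^2 := by
    have heq : (Z : ℤ) * a^2 = ∑ C ∈ 𝒞.filter (fun C => X C = 0), ((N:ℤ) * X C - a)^2 := by
      rw [Finset.sum_congr rfl (fun C hC => ?_), Finset.sum_const, nsmul_eq_mul]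
      have hXC : X C = 0 := (Finset.mem_filter.1 hC).2
      rw [hXC]; push_cast; ring
    rw [heq]
    exact Finset.sum_le_sum_of_subset_of_nonneg (Finset.filter_subset _ _)
      (fun _ _ _ => sq_nonneg _)
  have expand : ∑ C ∈ 𝒞, ((N:ℤ) * X C - a)^2
      = (N:ℤ)^2 * (∑ C ∈ 𝒞, ((X C : ℤ))^2) - 2*N*a*(∑ C ∈ 𝒞, (X C : ℤ)) + N * a^2 := by
    rw [Finset.sum_congr rfl (fun C _ => show ((N:ℤ) * X C - a)^2
        = (N:ℤ)^2 * ((X C : ℤ))^2 - 2*N*a*((X C : ℤ)) + a^2 by ring)]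
    rw [Finset.sum_add_distrib, Finset.sum_sub_distrib, ← Finset.mul_sum, ← Finset.mul_sum,
      Finset.sum_const, nsmul_eq_mul]
  have hs1 : (∑ C ∈ 𝒞, (X C : ℤ)) = a := by
    rw [ha, ← Nat.cast_sum, h1]; push_cast; ring
  have hs2 : (∑ C ∈ 𝒞, ((X C : ℤ))^2) ≤ 2*a + (r:ℤ)*r*D4 := by
    have hcast : (∑ C ∈ 𝒞, ((X C:ℤ))^2) = ((∑ C ∈ 𝒞, (X C)^2 : ℕ) : ℤ) := by push_cast; rfl
    rw [hcast, ha]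
    exact_mod_cast h2
  have hlcZ : (N:ℤ) * D4 ≤ (D2:ℤ) * D2 := by exact_mod_cast hlc
  have h4 : (N:ℤ)^2*((r:ℤ)*r*D4) ≤ (N:ℤ)*((r:ℤ)*r*((D2:ℤ)*D2)) := by
    calc (N:ℤ)^2*((r:ℤ)*r*D4) = ((N:ℤ)*((r:ℤ)*r))*((N:ℤ)*D4) := by ring
      _ ≤ ((N:ℤ)*((r:ℤ)*r))*((D2:ℤ)*D2) := by
          apply mul_le_mul_of_nonneg_left hlcZ
          positivity
      _ = (N:ℤ)*((r:ℤ)*r*((D2:ℤ)*D2)) := by ring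
  have ha2 : (N:ℤ) * a^2 = (N:ℤ)*((r:ℤ)*r*((D2:ℤ)*D2)) := by rw [ha]; ring
  have final : (Z:ℤ) * a^2 ≤ 2 * (N:ℤ)^2 * a := by
    calc (Z:ℤ) * a^2 ≤ ∑ C ∈ 𝒞, ((N:ℤ) * X C - a)^2 := key
      _ = (N:ℤ)^2 * (∑ C ∈ 𝒞, ((X C : ℤ))^2) - N * a^2 := by rw [expand, hs1]; ring
      _ ≤ (N:ℤ)^2 * (2*a + (r:ℤ)*r*D4) - N * a^2 := by
          have hN2 : (0:ℤ) ≤ (N:ℤ)^2 := sq_nonneg _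
          have := mul_le_mul_of_nonneg_left hs2 hN2
          linarith
      _ = 2 * (N:ℤ)^2 * a + ((N:ℤ)^2*((r:ℤ)*r*D4) - (N:ℤ)*((r:ℤ)*r*((D2:ℤ)*D2))) := by
          rw [← ha2]; ring
      _ ≤ 2 * (N:ℤ)^2 * a := by linarith
  have hA : (0:ℤ) < a := by rw [ha]; exact_mod_cast hpos
  have hZa : (Z:ℤ) * a ≤ 2 * (N:ℤ)^2 := by
    have h' : ((Z:ℤ) * a) * a ≤ (2 * (N:ℤ)^2) * a := by
      calc ((Z:ℤ) * a) * a = (Z:ℤ) * a^2 := by ring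
        _ ≤ 2 * (N:ℤ)^2 * a := final
        _ = (2 * (N:ℤ)^2) * a := by ring
    exact le_of_mul_le_mul_right h' hA
  have hfin : ((Z * (r * D2) : ℕ) : ℤ) ≤ ((2 * (N * N) : ℕ) : ℤ) := by
    push_cast
    calc (Z:ℤ) * ((r:ℤ) * (D2:ℤ)) = (Z:ℤ) * a := by rw [ha]
      _ ≤ 2 * (N:ℤ)^2 := hZa
      _ = 2 * ((N:ℤ) * (N:ℤ)) := by ring
  exact_mod_cast hfin

lemma aux44 {k m : ℕ} (hk8 : k ≤ 8*m) (h45 : 45 ≤ m) :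
    44 * (k * (k-1)) ≤ 2880 * (m * (m-1)) := by
  obtain ⟨m', rfl⟩ : ∃ m', m = m' + 45 := ⟨m - 45, by omega⟩
  rw [show m' + 45 - 1 = m' + 44 by omega]
  have h1 : k * (k-1) ≤ (8*(m'+45)) * (8*(m'+45)) := Nat.mul_le_mul (by omega) (by omega)
  calc 44 * (k * (k-1)) ≤ 44 * ((8*(m'+45)) * (8*(m'+45))) := Nat.mul_le_mul_left _ h1
    _ = 2816 * ((m'+45) * (m'+45)) := by ring
    _ ≤ 2880 * ((m'+45) * (m'+44)) := by nlinarith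

end AuxCount

section AuxG
variable {G : Type u} [AddCommGroup G] [DecidableEq G]

lemma mem_hatAdd {X : Finset G} {s : G} :
    s ∈ hatAdd X ↔ ∃ x ∈ X, ∃ y ∈ X, x ≠ y ∧ x + y = s := by
  simp only [hatAdd, mem_image, mem_filter, mem_product]
  constructor
  · rintro ⟨⟨x, y⟩, ⟨⟨hx, hy⟩, hne⟩, rfl⟩
    exact ⟨x, hx, y, hy, hne, rfl⟩
  · rintro ⟨x, hx, y, hy, hne, rfl⟩
    exact ⟨⟨x, y⟩, ⟨⟨hx, hy⟩, hne⟩, rfl⟩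

/-- ordered representations of `s` as a restricted sum in `A` -/
def reps (A : Finset G) (s : G) : Finset G :=
  A.filter fun x => s - x ∈ A ∧ s - x ≠ x

lemma mem_reps {A : Finset G} {s x : G} :
    x ∈ reps A s ↔ x ∈ A ∧ s - x ∈ A ∧ s - x ≠ x := by simp [reps]

lemma mem_hatAdd_iff_reps {A C : Finset G} (hCA : C ⊆ A) {s : G} :
    s ∈ hatAdd C ↔ ∃ x ∈ reps A s, x ∈ C ∧ s - x ∈ C := by
  rw [mem_hatAdd]
  constructor
  · rintro ⟨x, hx, y, hy, hne, rfl⟩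
    refine ⟨x, ?_, hx, ?_⟩
    · rw [mem_reps]
      have h1 : x + y - x = y := by abel
      rw [h1]
      exact ⟨hCA hx, hCA hy, fun h => hne h.symm⟩
    · simpa using hy
  · rintro ⟨x, hx, hxC, hsxC⟩
    rw [mem_reps] at hx
    exact ⟨x, hxC, s - x, hsxC, fun h => hx.2.2 h.symm, by abel⟩

lemma sum_reps_card (A : Finset G) :
    ∑ s ∈ hatAdd A, (reps A s).card = A.card * A.card - A.card := by
  rw [← Finset.offDiag_card]
  rw [Finset.card_eq_sum_card_fiberwise
    (f := fun p : G × G => p.1 + p.2) (t := hatAdd A)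
    (fun p hp => by
      rw [Finset.mem_coe, mem_offDiag] at hp
      exact mem_hatAdd.2 ⟨p.1, hp.1, p.2, hp.2.1, hp.2.2, rfl⟩)]
  refine Finset.sum_congr rfl fun s _ => ?_
  refine (Finset.card_bij' (fun p _ => p.1) (fun x _ => (x, s - x)) ?_ ?_ ?_ ?_).symm
  · intro p hp
    simp only [mem_filter, mem_offDiag] at hp
    rw [mem_reps]
    obtain ⟨⟨h1, h2, h3⟩, h4⟩ := hp
    have : s - p.1 = p.2 := by rw [← h4]; abel
    rw [this]
    exact ⟨h1, h2, fun h => h3 h.symm⟩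
  · intro x hx
    rw [mem_reps] at hx
    simp only [mem_filter, mem_offDiag]
    exact ⟨⟨hx.1, hx.2.1, fun h => hx.2.2 h.symm⟩, by abel⟩
  · intro p hp
    simp only [mem_filter, mem_offDiag] at hp
    have : s - p.1 = p.2 := by rw [← hp.2]; abel
    simp [this]
  · intro x hx
    simp

lemma sum_X (A : Finset G) (s : G) {m : ℕ} (hm : 2 ≤ m) :
    ∑ C ∈ A.powersetCard m, ((reps A s).filter fun x => x ∈ C ∧ s - x ∈ C).card
      = (reps A s).card * (A.card - 2).choose (m - 2) := by
  simp only [Finset.card_filter]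
  rw [Finset.sum_comm]
  have inner : ∀ x ∈ reps A s,
      (∑ C ∈ A.powersetCard m, if x ∈ C ∧ s - x ∈ C then 1 else 0)
        = (A.card - 2).choose (m - 2) := by
    intro x hx
    rw [← Finset.card_filter]
    rw [mem_reps] at hx
    have hne : x ≠ s - x := hx.2.2.symm
    have hfeq : (A.powersetCard m).filter (fun C => x ∈ C ∧ s - x ∈ C)
        = (A.powersetCard m).filter (fun C => ({x, s - x} : Finset G) ⊆ C) := by
      apply Finset.filter_congr
      intro C _
      simp [Finset.insert_subset_iff]
    rw [hfeq, card_powersetCard_filter_superset'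
      (by rw [Finset.insert_subset_iff]; exact ⟨hx.1, by simpa using hx.2.1⟩)
      (by rw [Finset.card_pair hne]; omega)]
    rw [Finset.card_pair hne]
  rw [Finset.sum_congr rfl inner, Finset.sum_const, smul_eq_mul]

lemma cnt_diag {A : Finset G} {s x y : G} {m : ℕ} (hm : 2 ≤ m)
    (hx : x ∈ reps A s) (hy' : y = x ∨ y = s - x) :
    ((A.powersetCard m).filter fun C => (x ∈ C ∧ s - x ∈ C) ∧ (y ∈ C ∧ s - y ∈ C)).card
      = (A.card - 2).choose (m - 2) := by
  have hxr := mem_reps.1 hx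
  have hnex : x ≠ s - x := hxr.2.2.symm
  have hfilter : ((A.powersetCard m).filter fun C => (x ∈ C ∧ s - x ∈ C) ∧ (y ∈ C ∧ s - y ∈ C))
      = (A.powersetCard m).filter fun C => ({x, s - x} : Finset G) ⊆ C := by
    apply Finset.filter_congr
    intro C _
    rcases hy' with rfl | rfl
    · simp only [Finset.insert_subset_iff, Finset.singleton_subset_iff]
      tauto
    · simp only [Finset.insert_subset_iff, Finset.singleton_subset_iff, sub_sub_cancel]
      tauto
  rw [hfilter, card_powersetCard_filter_superset'
    (by rw [Finset.insert_subset_iff]; exact ⟨hxr.1, by simpa using hxr.2.1⟩)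
    (by rw [Finset.card_pair hnex]; omega), Finset.card_pair hnex]

lemma cnt_offdiag {A : Finset G} {s x y : G} {m : ℕ} (hm : 4 ≤ m)
    (hx : x ∈ reps A s) (hy : y ∈ reps A s) (hyx : y ≠ x) (hysx : y ≠ s - x) :
    ((A.powersetCard m).filter fun C => (x ∈ C ∧ s - x ∈ C) ∧ (y ∈ C ∧ s - y ∈ C)).card
      = (A.card - 4).choose (m - 4) := by
  have hxr := mem_reps.1 hx
  have hyr := mem_reps.1 hy
  have hnex : x ≠ s - x := hxr.2.2.symm
  have hney : y ≠ s - y := hyr.2.2.symm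
  have hxsy : x ≠ s - y := by
    intro h
    apply hysx
    rw [h, sub_sub_cancel]
  have hsxsy : s - x ≠ s - y := fun h => hyx (sub_right_injective h).symm
  have hsxy : s - x ≠ y := fun h => hysx h.symm
  have hQcard : (insert x (insert (s - x) (insert y ({s - y} : Finset G)))).card = 4 := by
    rw [Finset.card_insert_of_notMem (by simp [hnex, hyx.symm, hxsy]),
      Finset.card_insert_of_notMem (by simp [hsxy, hsxsy]),
      Finset.card_insert_of_notMem (by simp [hney]), Finset.card_singleton]
  have hQA : (insert x (insert (s - x) (insert y ({s - y} : Finset G)))) ⊆ A := by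
    simp only [Finset.insert_subset_iff, Finset.singleton_subset_iff]
    exact ⟨hxr.1, hxr.2.1, hyr.1, hyr.2.1⟩
  have hfilter : ((A.powersetCard m).filter fun C => (x ∈ C ∧ s - x ∈ C) ∧ (y ∈ C ∧ s - y ∈ C))
      = (A.powersetCard m).filter
          fun C => (insert x (insert (s - x) (insert y ({s - y} : Finset G)))) ⊆ C := by
    apply Finset.filter_congr
    intro C _
    simp only [Finset.insert_subset_iff, Finset.singleton_subset_iff]
    tauto
  rw [hfilter, card_powersetCard_filter_superset' hQA (by rw [hQcard]; omega), hQcard]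

lemma sum_X_sq (A : Finset G) (s : G) {m : ℕ} (hm : 4 ≤ m) :
    ∑ C ∈ A.powersetCard m, (((reps A s).filter fun x => x ∈ C ∧ s - x ∈ C).card)^2
      ≤ 2*((reps A s).card * (A.card - 2).choose (m - 2))
        + ((reps A s).card * (reps A s).card) * ((A.card - 4).choose (m - 4)) := by
  classical
  have h1 : ∑ C ∈ A.powersetCard m, (((reps A s).filter fun x => x ∈ C ∧ s - x ∈ C).card)^2
      = ∑ x ∈ reps A s, ∑ y ∈ reps A s,
          ((A.powersetCard m).filter fun C => (x ∈ C ∧ s - x ∈ C) ∧ (y ∈ C ∧ s - y ∈ C)).card := by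
    have hstep : ∀ C : Finset G, (((reps A s).filter fun x => x ∈ C ∧ s - x ∈ C).card)^2
        = ∑ x ∈ reps A s, ∑ y ∈ reps A s,
            ((if x ∈ C ∧ s - x ∈ C then 1 else 0) * (if y ∈ C ∧ s - y ∈ C then 1 else 0)) := by
      intro C
      rw [Finset.card_filter, sq, Finset.sum_mul_sum]
    rw [Finset.sum_congr rfl (fun C _ => hstep C), Finset.sum_comm]
    refine Finset.sum_congr rfl fun x _ => ?_
    rw [Finset.sum_comm]
    refine Finset.sum_congr rfl fun y _ => ?_
    rw [Finset.card_filter]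
    refine Finset.sum_congr rfl fun C _ => ?_
    by_cases hp : x ∈ C ∧ s - x ∈ C <;> by_cases hq : y ∈ C ∧ s - y ∈ C <;> simp [hp, hq]
  rw [h1]
  have row : ∀ x ∈ reps A s,
      ∑ y ∈ reps A s,
          ((A.powersetCard m).filter fun C => (x ∈ C ∧ s - x ∈ C) ∧ (y ∈ C ∧ s - y ∈ C)).card
        ≤ 2*((A.card - 2).choose (m - 2)) + (reps A s).card * ((A.card - 4).choose (m - 4)) := by
    intro x hx
    rw [← Finset.sum_filter_add_sum_filter_not (reps A s) (fun y => y = x ∨ y = s - x)]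
    have d1 : ∑ y ∈ (reps A s).filter (fun y => y = x ∨ y = s - x),
        ((A.powersetCard m).filter fun C => (x ∈ C ∧ s - x ∈ C) ∧ (y ∈ C ∧ s - y ∈ C)).card
        ≤ 2 * ((A.card - 2).choose (m - 2)) := by
      calc ∑ y ∈ (reps A s).filter (fun y => y = x ∨ y = s - x),
            ((A.powersetCard m).filter fun C => (x ∈ C ∧ s - x ∈ C) ∧ (y ∈ C ∧ s - y ∈ C)).card
          ≤ ∑ _y ∈ (reps A s).filter (fun y => y = x ∨ y = s - x),
              (A.card - 2).choose (m - 2) := by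
            apply Finset.sum_le_sum
            intro y hy
            exact le_of_eq (cnt_diag (by omega) hx (Finset.mem_filter.1 hy).2)
        _ = ((reps A s).filter (fun y => y = x ∨ y = s - x)).card
              * (A.card - 2).choose (m - 2) := by
            rw [Finset.sum_const, smul_eq_mul]
        _ ≤ 2 * ((A.card - 2).choose (m - 2)) := by
            apply Nat.mul_le_mul_right
            calc ((reps A s).filter (fun y => y = x ∨ y = s - x)).card
                ≤ ({x, s - x} : Finset G).card := by
                  apply Finset.card_le_card
                  intro y hy
                  have := (Finset.mem_filter.1 hy).2
                  simp only [Finset.mem_insert, Finset.mem_singleton]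
                  exact this
              _ ≤ 2 := (Finset.card_insert_le _ _).trans (by simp)
    have d2 : ∑ y ∈ (reps A s).filter (fun y => ¬(y = x ∨ y = s - x)),
        ((A.powersetCard m).filter fun C => (x ∈ C ∧ s - x ∈ C) ∧ (y ∈ C ∧ s - y ∈ C)).card
        ≤ (reps A s).card * ((A.card - 4).choose (m - 4)) := by
      calc ∑ y ∈ (reps A s).filter (fun y => ¬(y = x ∨ y = s - x)),
            ((A.powersetCard m).filter fun C => (x ∈ C ∧ s - x ∈ C) ∧ (y ∈ C ∧ s - y ∈ C)).card
          ≤ ∑ _y ∈ (reps A s).filter (fun y => ¬(y = x ∨ y = s - x)),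
              (A.card - 4).choose (m - 4) := by
            apply Finset.sum_le_sum
            intro y hy
            obtain ⟨hyR, hy'⟩ := Finset.mem_filter.1 hy
            push_neg at hy'
            exact le_of_eq (cnt_offdiag hm hx hyR hy'.1 hy'.2)
        _ = ((reps A s).filter (fun y => ¬(y = x ∨ y = s - x))).card
              * (A.card - 4).choose (m - 4) := by
            rw [Finset.sum_const, smul_eq_mul]
        _ ≤ (reps A s).card * ((A.card - 4).choose (m - 4)) :=
            Nat.mul_le_mul_right _ (Finset.card_filter_le _ _)
    omega
  calc ∑ x ∈ reps A s, ∑ y ∈ reps A s,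
        ((A.powersetCard m).filter fun C => (x ∈ C ∧ s - x ∈ C) ∧ (y ∈ C ∧ s - y ∈ C)).card
      ≤ ∑ _x ∈ reps A s, (2*((A.card - 2).choose (m - 2))
          + (reps A s).card * ((A.card - 4).choose (m - 4))) := Finset.sum_le_sum row
    _ = (reps A s).card * (2*((A.card - 2).choose (m - 2))
          + (reps A s).card * ((A.card - 4).choose (m - 4))) := by
        rw [Finset.sum_const, smul_eq_mul]
    _ = 2*((reps A s).card * (A.card - 2).choose (m - 2))
          + ((reps A s).card * (reps A s).card) * ((A.card - 4).choose (m - 4)) := by ring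

end AuxG

/-- Every sufficiently large finite subset `A` of an abelian group contains a subset `C`
with `|C| ≥ |A|/8` and `|C +̂ C| ≥ 7|C|`. -/
theorem exists_subset_without_small_doubling :
    ∃ k₀ : ℕ, ∀ (G : Type u) [AddCommGroup G] [DecidableEq G] (A : Finset G),
      k₀ ≤ A.card →
      ∃ C : Finset G, C ⊆ A ∧ A.card ≤ 8 * C.card ∧ 7 * C.card ≤ (hatAdd C).card := by
  refine ⟨1000000, ?_⟩
  intro G _ _ A hk
  by_cases hbig : 7 * A.card ≤ (hatAdd A).card
  · exact ⟨A, Finset.Subset.refl A, by omega, hbig⟩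
  push_neg at hbig
  set k := A.card with hkdef
  set m := (k + 7) / 8 with hmdef
  have hm1 : k ≤ 8 * m := by omega
  have hm2 : 8 * m ≤ k + 7 := by omega
  have hm4 : 4 ≤ m := by omega
  have hm45 : 45 ≤ m := by omega
  have hmk : m ≤ k := by omega
  have hm2' : 2 ≤ m := by omega
  have hNpos : 0 < k.choose m := Nat.choose_pos hmk
  have hS7 : (hatAdd A).card ≤ 7 * k := by omega
  have hrk : ∀ s : G, (reps A s).card ≤ k := fun s => Finset.card_le_card (Finset.filter_subset _ _)
  -- the set of popular sums
  set Good := (hatAdd A).filter (fun s => 2880 ≤ (reps A s).card) with hGoodDef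
  have hGoodcard : k ≤ Good.card + 20161 := by
    have hsum := sum_reps_card A
    rw [← hkdef] at hsum
    rw [← Finset.sum_filter_add_sum_filter_not (hatAdd A)
      (fun s => 2880 ≤ (reps A s).card) (fun s => (reps A s).card)] at hsum
    rw [← hGoodDef] at hsum
    have hgood_ub : ∑ s ∈ Good, (reps A s).card ≤ Good.card * k := by
      calc ∑ s ∈ Good, (reps A s).card ≤ ∑ _s ∈ Good, k := Finset.sum_le_sum fun s _ => hrk s
        _ = Good.card * k := by rw [Finset.sum_const, smul_eq_mul]
    have hbad_ub : ∑ s ∈ (hatAdd A).filter (fun s => ¬ 2880 ≤ (reps A s).card),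
        (reps A s).card ≤ 7 * k * 2880 := by
      calc ∑ s ∈ (hatAdd A).filter (fun s => ¬ 2880 ≤ (reps A s).card), (reps A s).card
          ≤ ∑ _s ∈ (hatAdd A).filter (fun s => ¬ 2880 ≤ (reps A s).card), 2880 := by
            apply Finset.sum_le_sum
            intro s hs
            have := (Finset.mem_filter.1 hs).2
            omega
        _ = ((hatAdd A).filter (fun s => ¬ 2880 ≤ (reps A s).card)).card * 2880 := by
            rw [Finset.sum_const, smul_eq_mul]
        _ ≤ 7 * k * 2880 := by
            apply Nat.mul_le_mul_right
            exact le_trans (Finset.card_filter_le _ _) hS7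
    have hkk : k * k - k ≤ Good.card * k + 7 * k * 2880 := by omega
    have hkk2 : k * k ≤ (Good.card + 20161) * k := by
      have h1 : k ≤ k * k := Nat.le_mul_of_pos_left k (by omega)
      have h2 : k * k ≤ Good.card * k + 7 * k * 2880 + k := by omega
      calc k * k ≤ Good.card * k + 7 * k * 2880 + k := h2
        _ = (Good.card + 20161) * k := by ring
    exact Nat.le_of_mul_le_mul_right hkk2 (by omega)
  -- per popular sum: few subsets miss it
  have hZ : ∀ s ∈ Good, 22 * ((A.powersetCard m).filter fun C => s ∉ hatAdd C).card
      ≤ k.choose m := by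
    intro s hs
    obtain ⟨hsA, hsr⟩ := Finset.mem_filter.1 hs
    have hfeq : ((A.powersetCard m).filter fun C => s ∉ hatAdd C)
        = ((A.powersetCard m).filter fun C =>
            ((reps A s).filter fun x => x ∈ C ∧ s - x ∈ C).card = 0) := by
      apply Finset.filter_congr
      intro C hC
      have hCA : C ⊆ A := (Finset.mem_powersetCard.1 hC).1
      rw [Finset.card_eq_zero, Finset.filter_eq_empty_iff, mem_hatAdd_iff_reps hCA]
      constructor
      · intro h x hx hxC
        exact h ⟨x, hx, hxC⟩
      · intro h hex
        obtain ⟨x, hx, hxC⟩ := hex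
        exact h hx hxC
    rw [hfeq]
    have hcheb := cheb (A.powersetCard m)
      (fun C => ((reps A s).filter fun x => x ∈ C ∧ s - x ∈ C).card)
      (reps A s).card ((k - 2).choose (m - 2)) ((k - 4).choose (m - 4))
      (sum_X A s hm2') (sum_X_sq A s hm4)
      (by rw [Finset.card_powersetCard]; exact choose_log_concave hm4 hmk)
    rw [Finset.card_powersetCard] at hcheb
    -- notation
    set Zx := ((A.powersetCard m).filter fun C =>
      ((reps A s).filter fun x => x ∈ C ∧ s - x ∈ C).card = 0).card with hZx
    set r := (reps A s).card with hr
    set D2 := (k - 2).choose (m - 2) with hD2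
    set Nc := k.choose m with hNc
    have I := choose_mul_two hm2' hmk
    rw [← hNc, ← hD2] at I
    -- multiply hcheb by k*(k-1)
    have e1 : Zx * (r * D2) * (k * (k-1)) ≤ 2 * (Nc * Nc) * (k * (k-1)) :=
      Nat.mul_le_mul_right _ hcheb
    have e2 : Zx * r * (m * (m-1)) * Nc ≤ 2 * Nc * (k * (k-1)) * Nc := by
      calc Zx * r * (m * (m-1)) * Nc = Zx * r * (Nc * (m * (m-1))) := by ring
        _ = Zx * r * (k * (k-1) * D2) := by rw [I]
        _ = Zx * (r * D2) * (k * (k-1)) := by ring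
        _ ≤ 2 * (Nc * Nc) * (k * (k-1)) := e1
        _ = 2 * Nc * (k * (k-1)) * Nc := by ring
    have e3 : Zx * r * (m * (m-1)) ≤ 2 * Nc * (k * (k-1)) :=
      Nat.le_of_mul_le_mul_right e2 hNpos
    have hkm : 44 * (k * (k-1)) ≤ 2880 * (m * (m-1)) := aux44 hm1 hm45
    have e4 : 22 * Zx * (2880 * (m * (m-1))) ≤ Nc * (2880 * (m * (m-1))) := by
      calc 22 * Zx * (2880 * (m * (m-1))) = 22 * (Zx * (m * (m-1))) * 2880 := by ring
        _ ≤ 22 * (Zx * (m * (m-1))) * r := Nat.mul_le_mul_left _ hsr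
        _ = 22 * (Zx * r * (m * (m-1))) := by ring
        _ ≤ 22 * (2 * Nc * (k * (k-1))) := Nat.mul_le_mul_left _ e3
        _ = Nc * (44 * (k * (k-1))) := by ring
        _ ≤ Nc * (2880 * (m * (m-1))) := Nat.mul_le_mul_left _ hkm
    have hpos2 : 0 < 2880 * (m * (m-1)) := by
      have h1 : 0 < m - 1 := by omega
      have h2 : 0 < m := by omega
      positivity
    exact Nat.le_of_mul_le_mul_right e4 hpos2
  -- main counting
  have main : ∃ C ∈ A.powersetCard m, 7 * m ≤ (hatAdd C).card := by
    by_contra hcon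
    push_neg at hcon
    have ub : ∑ C ∈ A.powersetCard m, (hatAdd C).card ≤ k.choose m * (7*m - 1) := by
      calc ∑ C ∈ A.powersetCard m, (hatAdd C).card
          ≤ ∑ _C ∈ A.powersetCard m, (7*m - 1) := by
            apply Finset.sum_le_sum
            intro C hC
            have := hcon C hC
            omega
        _ = (A.powersetCard m).card * (7*m - 1) := by rw [Finset.sum_const, smul_eq_mul]
        _ = k.choose m * (7*m - 1) := by rw [Finset.card_powersetCard]
    have swap : ∑ C ∈ A.powersetCard m, (Good.filter fun s' => s' ∈ hatAdd C).card
        = ∑ s' ∈ Good, ((A.powersetCard m).filter fun C => s' ∈ hatAdd C).card := by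
      simp only [Finset.card_filter]
      rw [Finset.sum_comm]
    have lower : ∀ s' ∈ Good,
        21 * k.choose m ≤ 22 * ((A.powersetCard m).filter fun C => s' ∈ hatAdd C).card := by
      intro s' hs'
      have h22 := hZ s' hs'
      have hce := Finset.card_filter_add_card_filter_not
        (s := A.powersetCard m) (p := fun C => s' ∈ hatAdd C)
      rw [Finset.card_powersetCard, ← hkdef] at hce
      omega
    have lb2 : 21 * k.choose m * Good.card ≤ 22 * ∑ C ∈ A.powersetCard m, (hatAdd C).card := by
      calc 21 * k.choose m * Good.card = ∑ _s' ∈ Good, 21 * k.choose m := by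
            rw [Finset.sum_const, smul_eq_mul]; ring
        _ ≤ ∑ s' ∈ Good, 22 * ((A.powersetCard m).filter fun C => s' ∈ hatAdd C).card :=
            Finset.sum_le_sum lower
        _ = 22 * ∑ s' ∈ Good, ((A.powersetCard m).filter fun C => s' ∈ hatAdd C).card := by
            rw [Finset.mul_sum]
        _ = 22 * ∑ C ∈ A.powersetCard m, (Good.filter fun s' => s' ∈ hatAdd C).card := by
            rw [swap]
        _ ≤ 22 * ∑ C ∈ A.powersetCard m, (hatAdd C).card := by
            apply Nat.mul_le_mul_left
            apply Finset.sum_le_sum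
            intro C _
            apply Finset.card_le_card
            intro s' hs'
            exact (Finset.mem_filter.1 hs').2
    have final : 21 * Good.card * k.choose m ≤ 22 * (7*m - 1) * k.choose m := by
      calc 21 * Good.card * k.choose m = 21 * k.choose m * Good.card := by ring
        _ ≤ 22 * ∑ C ∈ A.powersetCard m, (hatAdd C).card := lb2
        _ ≤ 22 * (k.choose m * (7*m - 1)) := Nat.mul_le_mul_left _ ub
        _ = 22 * (7*m - 1) * k.choose m := by ring
    have : 21 * Good.card ≤ 22 * (7*m - 1) := Nat.le_of_mul_le_mul_right final hNpos
    omega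
  obtain ⟨C, hC𝒞, hC7⟩ := main
  obtain ⟨hCA, hCcard⟩ := Finset.mem_powersetCard.1 hC𝒞
  refine ⟨C, hCA, by omega, by omega⟩
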